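/- Let X = A ∪ B where A = {1/n : n ∈ {2,3,4,5,6,7}} and B = [1,2], with d symmetric, d(x,y) = 0 iff x = y, with the special values d(1/2,1/3)=d(1/4,1/5)=d(1/6,1/7)=0.05, d(1/2,1/4)=d(1/3,1/7)=d(1/5,1/6)=0.08, d(1/2,1/6)=d(1/3,1/4)=d(1/5,1/7)=0.4, d(1/2,1/5)=d(1/3,1/6)=d(1/4,1/7)=0.24, d(1/2,1/7)=d(1/3,1/5)=d(1/4,1/6)=0.15, and d(x,y) = |x−y|² otherwise. Then (X,d) is a rectangular b-metric space with coefficient s = 3, but it is not a metric space, not a b-metric space with coefficient s = 3, and not a rectangular metric space. -/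

import Mathlib

open Filter Topology

def RectB {X : Type*} (d : X → X → ℝ) (s : ℝ) : Prop :=
  (∀ x y, 0 ≤ d x y) ∧
  (∀ x y, d x y = 0 ↔ x = y) ∧
  (∀ x y, d x y = d y x) ∧
  (∀ x y u v, u ≠ v → u ≠ x → u ≠ y → v ≠ x → v ≠ y →
    d x y ≤ s * (d x u + d u v + d v y))

def ConvTo {X : Type*} (d : X → X → ℝ) (x : ℕ → X) (a : X) : Prop :=
  Tendsto (fun n => d (x n) a) atTop (𝓝 0)

def DCauchy {X : Type*} (d : X → X → ℝ) (x : ℕ → X) : Prop :=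
  ∀ ε > 0, ∃ N, ∀ m ≥ N, ∀ n ≥ N, d (x m) (x n) < ε

def IsTheta (θ : ℝ → ℝ) : Prop :=
  (∀ t, 0 < t → 1 < θ t) ∧
  StrictMonoOn θ (Set.Ioi 0) ∧
  ContinuousOn θ (Set.Ioi 0) ∧
  ∀ x : ℕ → ℝ, (∀ n, 0 < x n) →
    (Tendsto (fun n => θ (x n)) atTop (𝓝 1) ↔ Tendsto x atTop (𝓝 0))

def IsPhi (φ : ℝ → ℝ) : Prop :=
  (∀ t, 1 ≤ t → 1 ≤ φ t) ∧
  MonotoneOn φ (Set.Ici 1) ∧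
  ContinuousOn φ (Set.Ici 1) ∧
  ∀ t, 1 < t → Tendsto (fun n => φ^[n] t) atTop (𝓝 1)

def TriAdm {X : Type*} (T : X → X) (α η : X → X → ℝ) : Prop :=
  (∀ x y, 1 ≤ α x y → 1 ≤ α (T x) (T y)) ∧
  (∀ x y, η x y ≤ 1 → η (T x) (T y) ≤ 1) ∧
  (∀ x y z, 1 ≤ α x y → 1 ≤ α y z → 1 ≤ α x z) ∧
  (∀ x y z, η x y ≤ 1 → η y z ≤ 1 → η x z ≤ 1)

def AEComplete {X : Type*} (d α η : X → X → ℝ) : Prop :=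
  ∀ x : ℕ → X, (∀ n, 1 ≤ α (x n) (x (n+1)) ∨ η (x n) (x (n+1)) ≤ 1) →
    DCauchy d x → ∃ a, ConvTo d x a

def AEContinuous {X : Type*} (d α η : X → X → ℝ) (T : X → X) : Prop :=
  ∀ (x : ℕ → X) (a : X),
    (∀ n, 1 ≤ α (x n) (x (n+1)) ∨ η (x n) (x (n+1)) ≤ 1) →
    ConvTo d x a → ConvTo d (fun n => T (x n)) (T a)

def AERegular {X : Type*} (d α η : X → X → ℝ) : Prop :=
  ∀ (x : ℕ → X) (a : X),
    (∀ n, 1 ≤ α (x n) (x (n+1)) ∨ η (x n) (x (n+1)) ≤ 1) →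
    ConvTo d x a → ∀ n, 1 ≤ α (x n) a ∨ η (x n) a ≤ 1

def AEContr {X : Type*} (d α η : X → X → ℝ) (T : X → X) (θ φ : ℝ → ℝ)
    (s β₁ β₂ β₃ β₄ : ℝ) : Prop :=
  ∀ x y, (1 ≤ α x y ∨ η x y ≤ 1) → 0 < d (T x) (T y) →
    θ (s ^ 2 * d (T x) (T y)) ≤
      φ (θ (β₁ * d x y + β₂ * d (T x) x + β₃ * d (T y) y + β₄ * d y (T x)))

open scoped Classical in
noncomputable def exD15 : ℝ → ℝ → ℝ := fun x y =>
  if x = y then 0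
  else if ({x, y} : Set ℝ) = {1/2, 1/3} ∨ ({x, y} : Set ℝ) = {1/4, 1/5} ∨
          ({x, y} : Set ℝ) = {1/6, 1/7} then 0.05
  else if ({x, y} : Set ℝ) = {1/2, 1/4} ∨ ({x, y} : Set ℝ) = {1/3, 1/7} ∨
          ({x, y} : Set ℝ) = {1/5, 1/6} then 0.08
  else if ({x, y} : Set ℝ) = {1/2, 1/6} ∨ ({x, y} : Set ℝ) = {1/3, 1/4} ∨
          ({x, y} : Set ℝ) = {1/5, 1/7} then 0.4
  else if ({x, y} : Set ℝ) = {1/2, 1/5} ∨ ({x, y} : Set ℝ) = {1/3, 1/6} ∨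
          ({x, y} : Set ℝ) = {1/4, 1/7} then 0.24
  else if ({x, y} : Set ℝ) = {1/2, 1/7} ∨ ({x, y} : Set ℝ) = {1/3, 1/5} ∨
          ({x, y} : Set ℝ) = {1/4, 1/6} then 0.15
  else |x - y| ^ 2

noncomputable abbrev X15 : Set ℝ :=
  ({1/2, 1/3, 1/4, 1/5, 1/6, 1/7} : Set ℝ) ∪ Set.Icc 1 2

lemma exD15_symm (x y : ℝ) : exD15 x y = exD15 y x := by
  unfold exD15
  rw [Set.pair_comm y x, abs_sub_comm y x]
  rcases eq_or_ne x y with rfl | h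
  · simp
  · rw [if_neg h, if_neg (show ¬(y = x) from fun e => h e.symm)]

lemma exD15_nonneg (x y : ℝ) : 0 ≤ exD15 x y := by
  unfold exD15; split_ifs <;> positivity

lemma exD15_eq_zero (x y : ℝ) : exD15 x y = 0 ↔ x = y := by
  rcases eq_or_ne x y with h | h
  · simp [exD15, h]
  · unfold exD15
    rw [if_neg h]
    split_ifs <;> simp [h, sub_eq_zero] <;> norm_num


lemma exD15_lb (x y : ℝ) : |x - y| ^ 2 ≤ exD15 x y := by
  unfold exD15
  split_ifs with h1 h2 h3 h4 h5 h6
  · subst h1; simp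
  all_goals try (rcases ‹_ ∨ _ ∨ _› with h | h | h <;>
    rw [Set.pair_eq_pair_iff] at h <;>
    rcases h with ⟨rfl, rfl⟩ | ⟨rfl, rfl⟩ <;> rw [sq_abs] <;> norm_num)
  rfl

lemma exD15_ge1 (x y : ℝ) (h : 1 ≤ x ∨ 1 ≤ y) (hne : x ≠ y) : exD15 x y = |x - y| ^ 2 := by
  unfold exD15
  rw [if_neg hne]
  split_ifs with h2 h3 h4 h5 h6
  all_goals first
    | rfl
    | (exfalso; rcases ‹_ ∨ _ ∨ _› with hc | hc | hc <;>
        rw [Set.pair_eq_pair_iff] at hc <;>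
        rcases hc with ⟨rfl, rfl⟩ | ⟨rfl, rfl⟩ <;> rcases h with h | h <;> norm_num at h)

set_option maxHeartbeats 3000000 in
lemma exD15_AA {x y : ℝ} (hx : x ∈ ({1/2, 1/3, 1/4, 1/5, 1/6, 1/7} : Set ℝ))
    (hy : y ∈ ({1/2, 1/3, 1/4, 1/5, 1/6, 1/7} : Set ℝ)) (hne : x ≠ y) :
    1/20 ≤ exD15 x y ∧ exD15 x y ≤ 2/5 := by
  simp only [Set.mem_insert_iff, Set.mem_singleton_iff] at hx hy
  rcases hx with rfl|rfl|rfl|rfl|rfl|rfl <;> rcases hy with rfl|rfl|rfl|rfl|rfl|rfl <;>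
    revert hne <;> norm_num [exD15, Set.pair_eq_pair_iff]

lemma sq_tri (a b c d : ℝ) : |a - d| ^ 2 ≤ 3 * (|a - b| ^ 2 + |b - c| ^ 2 + |c - d| ^ 2) := by
  have h1 : |a - d| ≤ |a - b| + |b - c| + |c - d| := by
    calc |a - d| = |(a - b) + (b - c) + (c - d)| := by ring_nf
    _ ≤ _ := by
        refine (abs_add_le _ _).trans ?_
        gcongr
        exact abs_add_le _ _
  have h0 : (0:ℝ) ≤ |a - d| := abs_nonneg _
  nlinarith [abs_nonneg (a-b), abs_nonneg (b-c), abs_nonneg (c-d), sq_nonneg (|a-b| - |b-c|), sq_nonneg (|b-c| - |c-d|), sq_nonneg (|a-b| - |c-d|)]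

lemma A_le_half {x : ℝ} (hx : x ∈ ({1/2, 1/3, 1/4, 1/5, 1/6, 1/7} : Set ℝ)) : x ≤ 1/2 := by
  simp only [Set.mem_insert_iff, Set.mem_singleton_iff] at hx
  rcases hx with rfl|rfl|rfl|rfl|rfl|rfl <;> norm_num

lemma exD15_AB {x y : ℝ} (hx : x ∈ ({1/2, 1/3, 1/4, 1/5, 1/6, 1/7} : Set ℝ))
    (hy : y ∈ Set.Icc (1:ℝ) 2) : 1/4 ≤ exD15 x y := by
  have hx2 := A_le_half hx
  have hy1 := hy.1
  have hne : x ≠ y := by intro rfl; linarith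
  rw [exD15_ge1 x y (Or.inr hy1) hne]
  have : 1/2 ≤ |x - y| := by
    rw [abs_sub_comm]
    calc (1/2:ℝ) ≤ y - x := by linarith
    _ ≤ |y - x| := le_abs_self _
  nlinarith

lemma exD15_rect : ∀ x y u v : X15, u ≠ v → u ≠ x → u ≠ y → v ≠ x → v ≠ y →
    exD15 x.1 y.1 ≤ 3 * (exD15 x.1 u.1 + exD15 u.1 v.1 + exD15 v.1 y.1) := by
  rintro ⟨x, hx⟩ ⟨y, hy⟩ ⟨u, hu⟩ ⟨v, hv⟩ huv hux huy hvx hvy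
  simp only [ne_eq, Subtype.mk.injEq] at huv hux huy hvx hvy
  simp only
  have n1 := exD15_nonneg x u
  have n2 := exD15_nonneg u v
  have n3 := exD15_nonneg v y
  rcases eq_or_ne x y with rfl | hxy
  · rw [(exD15_eq_zero x x).2 rfl]; linarith
  have easy : exD15 x y = |x - y|^2 →
      exD15 x y ≤ 3 * (exD15 x u + exD15 u v + exD15 v y) := by
    intro h
    rw [h]
    calc |x - y|^2 ≤ 3 * (|x - u|^2 + |u - v|^2 + |v - y|^2) := sq_tri x u v y
    _ ≤ _ := by
        have := exD15_lb x u; have := exD15_lb u v; have := exD15_lb v y; linarith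
  rcases hx with hxA | hxB
  swap
  · exact easy (exD15_ge1 x y (Or.inl hxB.1) hxy)
  rcases hy with hyA | hyB
  swap
  · exact easy (exD15_ge1 x y (Or.inr hyB.1) hxy)
  -- x, y ∈ A
  have hub : exD15 x y ≤ 2/5 := (exD15_AA hxA hyA hxy).2
  rcases hu with huA | huB
  swap
  · -- u ∈ Icc: d x u ≥ 1/4
    have := exD15_AB hxA huB
    rw [exD15_symm x u] at *
    linarith [exD15_AB hxA huB]
  rcases hv with hvA | hvB
  swap
  · have := exD15_AB huA hvB
    linarith
  · have h1 := (exD15_AA hxA huA (fun e => hux e.symm)).1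
    have h2 := (exD15_AA huA hvA huv).1
    have h3 := (exD15_AA hvA hyA hvy).1
    linarith


theorem stmt15 :
    RectB (fun x y : X15 => exD15 x.1 y.1) 3 ∧
    ¬ (∀ x y z : X15, exD15 x.1 z.1 ≤ exD15 x.1 y.1 + exD15 y.1 z.1) ∧
    ¬ (∀ x y z : X15, exD15 x.1 z.1 ≤ 3 * (exD15 x.1 y.1 + exD15 y.1 z.1)) ∧
    ¬ RectB (fun x y : X15 => exD15 x.1 y.1) 1 := by
  have m2 : (1/2:ℝ) ∈ X15 := Or.inl (by norm_num)
  have m3 : (1/3:ℝ) ∈ X15 := Or.inl (by norm_num)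
  have m5 : (1/5:ℝ) ∈ X15 := Or.inl (by norm_num)
  have m6 : (1/6:ℝ) ∈ X15 := Or.inl (by norm_num)
  have m7 : (1/7:ℝ) ∈ X15 := Or.inl (by norm_num)
  have e57 : exD15 (1/5) (1/7) = 0.4 := by norm_num [exD15, Set.pair_eq_pair_iff]
  have e56 : exD15 (1/5) (1/6) = 0.08 := by norm_num [exD15, Set.pair_eq_pair_iff]
  have e67 : exD15 (1/6) (1/7) = 0.05 := by norm_num [exD15, Set.pair_eq_pair_iff]
  have e26 : exD15 (1/2) (1/6) = 0.4 := by norm_num [exD15, Set.pair_eq_pair_iff]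
  have e23 : exD15 (1/2) (1/3) = 0.05 := by norm_num [exD15, Set.pair_eq_pair_iff]
  have e37 : exD15 (1/3) (1/7) = 0.08 := by norm_num [exD15, Set.pair_eq_pair_iff]
  refine ⟨⟨fun x y => exD15_nonneg _ _,
      fun x y => by rw [exD15_eq_zero]; exact ⟨fun h => Subtype.ext h, fun h => by rw [h]⟩,
      fun x y => exD15_symm _ _,
      fun x y u v h1 h2 h3 h4 h5 => exD15_rect x y u v h1 h2 h3 h4 h5⟩, ?_, ?_, ?_⟩
  · intro h
    have := h ⟨1/5, m5⟩ ⟨1/6, m6⟩ ⟨1/7, m7⟩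
    rw [e57, e56, e67] at this
    norm_num at this
  · intro h
    have := h ⟨1/5, m5⟩ ⟨1/6, m6⟩ ⟨1/7, m7⟩
    rw [e57, e56, e67] at this
    norm_num at this
  · intro h
    have := h.2.2.2 ⟨1/2, m2⟩ ⟨1/6, m6⟩ ⟨1/3, m3⟩ ⟨1/7, m7⟩
      (by simp only [ne_eq, Subtype.mk.injEq]; norm_num)
      (by simp only [ne_eq, Subtype.mk.injEq]; norm_num)
      (by simp only [ne_eq, Subtype.mk.injEq]; norm_num)
      (by simp only [ne_eq, Subtype.mk.injEq]; norm_num)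
      (by simp only [ne_eq, Subtype.mk.injEq]; norm_num)
    simp only at this
    rw [e26, e23, e37, exD15_symm ((1:ℝ)/7) (1/6), e67] at this
    norm_num at this
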